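/- For every heap x ∈ M and every nondecreasing sequence (xₙ)ₙ≥0 of heaps in M, if the least upper bound ⋁ₙ xₙ (taken in M̄) satisfies ⋁ₙ xₙ ≥ x, then there exists an integer n ≥ 0 with xₙ ≥ x. -/

import Mathlib

open MeasureTheory Filter
open scoped ENNReal NNReal

namespace HeapPaper

variable {S : Type}

/-- Commutation pairs of words, generating the trace congruence. -/
def CommRel (I : S → S → Prop) (w₁ w₂ : FreeMonoid S) : Prop :=
  ∃ a b : S, I a b ∧ w₁ = FreeMonoid.of a * FreeMonoid.of b ∧
    w₂ = FreeMonoid.of b * FreeMonoid.of a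

/-- The congruence on the free monoid generated by the commutation of independent pieces. -/
def HeapCon (I : S → S → Prop) : Con (FreeMonoid S) := conGen (CommRel I)

/-- The heap monoid `M(Σ, I)`:  the presented monoid `⟨Σ | ab = ba, (a,b) ∈ I⟩`. -/
def Heap (I : S → S → Prop) := (HeapCon I).Quotient

instance (I : S → S → Prop) : Monoid (Heap I) :=
  inferInstanceAs (Monoid (HeapCon I).Quotient)

/-- The unique additive extension to heaps of a function `φ` defined on pieces. -/
def addExt {A : Type} [AddCommMonoid A] {I : S → S → Prop} (φ : S → A) : Heap I → A :=
  fun x => Multiplicative.toAdd <|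
    (Con.lift (HeapCon I) (FreeMonoid.lift fun a => Multiplicative.ofAdd (φ a))
      (Con.conGen_le.mpr (by
        rintro w₁ w₂ ⟨a, b, hab, rfl, rfl⟩
        exact (Con.ker_rel _).mpr (by simp [map_mul, mul_comm])))) x

/-- The length `|x|` of a heap: the common length of its representative words. -/
def len {I : S → S → Prop} (x : Heap I) : ℕ := addExt (fun _ => 1) x

/-- The number `|x|ₐ` of occurrences of the piece `a` in the heap `x`. -/
def occ {I : S → S → Prop} [DecidableEq S] (a : S) (x : Heap I) : ℕ :=
  addExt (fun b => if b = a then 1 else 0) x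

/-- The additive extension `⟨φ, x⟩` of a real-valued cost function. -/
def pairing {I : S → S → Prop} (φ : S → ℝ) (x : Heap I) : ℝ := addExt φ x

/-- The left-divisibility order on the heap monoid. -/
def hLe {I : S → S → Prop} (x y : Heap I) : Prop := ∃ z : Heap I, y = x * z

/-- Cliques: finite sets of pairwise independent pieces. -/
def Cl (I : S → S → Prop) := {s : Finset S // ∀ a ∈ s, ∀ b ∈ s, a ≠ b → I a b}

/-- The empty clique. -/
def emptyCl (I : S → S → Prop) : Cl I := ⟨∅, by simp⟩

/-- The heap associated with a clique (product of its pieces, in any order). -/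
def Cl.heap {I : S → S → Prop} (γ : Cl I) : Heap I :=
  γ.1.noncommProd (fun a => (HeapCon I).mk' (FreeMonoid.of a)) (by
    intro a ha b hb hab
    have hI : I a b := γ.2 a ha b hb hab
    show (HeapCon I).mk' (FreeMonoid.of a) * (HeapCon I).mk' (FreeMonoid.of b)
        = (HeapCon I).mk' (FreeMonoid.of b) * (HeapCon I).mk' (FreeMonoid.of a)
    rw [← map_mul, ← map_mul]
    exact (Con.eq _).mpr (ConGen.Rel.of _ _ ⟨a, b, hI, rfl, rfl⟩))

/-- The Cartier–Foata move relation `γ → γ'` between cliques. -/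
def Move {I : S → S → Prop} (γ γ' : Cl I) : Prop :=
  ∀ b ∈ γ'.1, ∃ a ∈ γ.1, ¬ I a b

/-- The boundary `∂M`: infinite admissible sequences of nonempty cliques. -/
def Bnd (I : S → S → Prop) :=
  {ξ : ℕ → Cl I // (∀ n, (ξ n).1.Nonempty) ∧ ∀ n, Move (ξ n) (ξ (n + 1))}

/-- `M̄ = M ∪ ∂M`. -/
def MB (I : S → S → Prop) := Heap I ⊕ Bnd I

/-- Partial products of a sequence of cliques. -/
def ppSeq {I : S → S → Prop} (c : ℕ → Cl I) (n : ℕ) : Heap I :=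
  ((List.range n).map fun i => (c i).heap).prod

/-- `c` is the Cartier–Foata decomposition of the heap `x`, padded with empty cliques:
`c` is admissible, eventually empty, with partial products eventually equal to `x`. -/
def CFprop (I : S → S → Prop) (c : ℕ → Cl I) (x : Heap I) : Prop :=
  (∀ n, Move (c n) (c (n + 1))) ∧
    ∃ N, ∀ n, N ≤ n → ppSeq c n = x ∧ c n = emptyCl I

/-- The (padded) Cartier–Foata decomposition of a heap. -/
noncomputable def cf (I : S → S → Prop) (x : Heap I) : ℕ → Cl I :=
  letI := Classical.propDecidable (∃ c, CFprop I c x)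
  if h : ∃ c, CFprop I c x then h.choose else fun _ => emptyCl I

/-- The Cartier–Foata sequence of an element of `M̄`. -/
noncomputable def seqOf {I : S → S → Prop} : MB I → ℕ → Cl I
  | .inl x => cf I x
  | .inr ξ => ξ.1

/-- Partial products of the Cartier–Foata sequence of an element of `M̄`. -/
noncomputable def pp {I : S → S → Prop} (ζ : MB I) (n : ℕ) : Heap I :=
  ppSeq (seqOf ζ) n

/-- The order on `M̄`: `ξ ≤ ξ'` iff `γ₁⋯γₙ ≤ γ'₁⋯γ'ₙ` in `M` for all `n`. -/
noncomputable def mLe {I : S → S → Prop} (ζ ζ' : MB I) : Prop :=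
  ∀ n : ℕ, hLe (pp ζ n) (pp ζ' n)

/-- The elementary cylinder `↑x ⊆ ∂M` of base `x ∈ M`. -/
noncomputable def cyl {I : S → S → Prop} (x : Heap I) : Set (Bnd I) :=
  {ξ : Bnd I | mLe (.inl x) (.inr ξ)}

/-- The σ-algebra `𝔉` on `∂M` generated by the elementary cylinders. -/
noncomputable def Fsa (I : S → S → Prop) : MeasurableSpace (Bnd I) :=
  MeasurableSpace.generateFrom {A : Set (Bnd I) | ∃ x : Heap I, A = cyl x}

noncomputable instance (I : S → S → Prop) : MeasurableSpace (Bnd I) := Fsa I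

/-- `ζ` is the least upper bound in `M̄` of the nondecreasing sequence `(x·γ₁⋯γₙ)ₙ`,
where `(γₙ)` is the Cartier–Foata sequence of `ξ`; this characterizes `x·ξ`. -/
noncomputable def IsConc {I : S → S → Prop} (x : Heap I) (ξ : Bnd I) (ζ : MB I) : Prop :=
  (∀ n : ℕ, mLe (.inl (x * pp (.inr ξ) n)) ζ) ∧
    ∀ η : MB I, (∀ n : ℕ, mLe (.inl (x * pp (.inr ξ) n)) η) → mLe ζ η

/-- The concatenation `x·ξ ∈ ∂M` of a heap `x` and an infinite heap `ξ`. -/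
noncomputable def concB {I : S → S → Prop} (x : Heap I) (ξ : Bnd I) : Bnd I :=
  letI := Classical.propDecidable (∃ ζ : Bnd I, IsConc x ξ (.inr ζ))
  if h : ∃ ζ : Bnd I, IsConc x ξ (.inr ζ) then h.choose else ξ

/-- The difference `ξ − x`: the unique `ζ ∈ ∂M` with `x·ζ = ξ` (junk value if none exists). -/
noncomputable def subB {I : S → S → Prop} (ξ : Bnd I) (x : Heap I) : Bnd I :=
  letI := Classical.propDecidable (∃ ζ : Bnd I, concB x ζ = ξ)
  if h : ∃ ζ : Bnd I, concB x ζ = ξ then h.choose else ξ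

/-- Asynchronous stopping time. -/
noncomputable def IsAST {I : S → S → Prop} (V : Bnd I → MB I) : Prop :=
  (∀ ξ : Bnd I, mLe (V ξ) (.inr ξ)) ∧
    ∀ (ξ ξ' : Bnd I) (x : Heap I), V ξ = .inl x → mLe (.inl x) (.inr ξ') → V ξ' = V ξ

/-- The shift operator `θ_V` associated with an AST `V` (junk: identity outside its domain). -/
noncomputable def shiftV {I : S → S → Prop} (V : Bnd I → MB I) (ξ : Bnd I) : Bnd I :=
  match V ξ with
  | .inl x => subB ξ x
  | .inr _ => ξ

/-- The σ-algebra `𝔉_V` generated by the cylinders of the finite values of `V`. -/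
noncomputable def astSA {I : S → S → Prop} (V : Bnd I → MB I) : MeasurableSpace (Bnd I) :=
  MeasurableSpace.generateFrom
    {A : Set (Bnd I) | ∃ x : Heap I, (∃ ξ : Bnd I, V ξ = .inl x) ∧ A = cyl x}

/-- The iterated sequence `(Vₙ)ₙ` of an AST `V`:  `V₀ = 0` and
`V_{n+1}(ξ) = Vₙ(ξ)·V(ξ − Vₙ(ξ))` if `Vₙ(ξ) ∈ M`, `V_{n+1}(ξ) = ξ` otherwise. -/
noncomputable def iter {I : S → S → Prop} (V : Bnd I → MB I) : ℕ → Bnd I → MB I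
  | 0, _ => .inl 1
  | n + 1, ξ =>
    match iter V n ξ with
    | .inl x =>
      match V (subB ξ x) with
      | .inl y => .inl (x * y)
      | .inr ζ => .inr (concB x ζ)
    | .inr _ => .inr ξ

/-- The increment `Δ_{n+1} = V ∘ θ_{Vₙ}` (junk value outside the domain of `θ_{Vₙ}`). -/
noncomputable def Delta {I : S → S → Prop} (V : Bnd I → MB I) (n : ℕ) (ξ : Bnd I) : MB I :=
  match iter V n ξ with
  | .inl x => V (subB ξ x)
  | .inr _ => .inr ξ

/-- The length of an element of `M̄`, with `|ξ| = ∞` for `ξ ∈ ∂M`. -/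
noncomputable def lenE {I : S → S → Prop} : MB I → ℝ≥0∞
  | .inl x => (len x : ℝ≥0∞)
  | .inr _ => ⊤

/-- `E|V| < ∞`. -/
noncomputable def EVfin {I : S → S → Prop} (P : Measure (Bnd I)) (V : Bnd I → MB I) : Prop :=
  ∫⁻ ξ, lenE (V ξ) ∂P < ⊤

/-- The AST `V` is exhaustive: it is `ℙ`-a.s. finite and `ℙ`-a.s. `ξ = ⋁ₙ Vₙ(ξ)`
(`ξ` is the least upper bound of its iterates). -/
noncomputable def Exhaustive {I : S → S → Prop} (P : Measure (Bnd I)) (V : Bnd I → MB I) : Prop :=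
  (∀ᵐ ξ ∂P, ∃ x : Heap I, V ξ = .inl x) ∧
    ∀ᵐ ξ ∂P, (∀ n : ℕ, mLe (iter V n ξ) (.inr ξ)) ∧
      ∀ ζ : MB I, (∀ n : ℕ, mLe (iter V n ξ) ζ) → mLe (.inr ξ) ζ

/-- `ℙ` is a Bernoulli measure: a probability measure on `(∂M, 𝔉)` that is multiplicative
and positive on elementary cylinders. -/
noncomputable def IsBernoulli {I : S → S → Prop} (P : Measure (Bnd I)) : Prop :=
  IsProbabilityMeasure P ∧
    (∀ x y : Heap I, P (cyl (x * y)) = P (cyl x) * P (cyl y)) ∧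
    ∀ x : Heap I, 0 < P (cyl x)

/-- `ζ` is the greatest lower bound, within the complete lattice `L(ξ)`, of the set
`Hₐ(ξ)` of finite subheaps of `ξ` containing an occurrence of `a`:  this characterizes
the first hitting time of `a`. -/
noncomputable def IsHit {I : S → S → Prop} [DecidableEq S] (a : S) (ξ : Bnd I) (ζ : MB I) :
    Prop :=
  mLe ζ (.inr ξ) ∧
    (∀ x : Heap I, mLe (.inl x) (.inr ξ) → 0 < occ a x → mLe ζ (.inl x)) ∧
    ∀ η : MB I, mLe η (.inr ξ) →
      (∀ x : Heap I, mLe (.inl x) (.inr ξ) → 0 < occ a x → mLe η (.inl x)) → mLe η ζ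

/-- The first hitting time of the piece `a`. -/
noncomputable def hit {I : S → S → Prop} [DecidableEq S] (a : S) (ξ : Bnd I) : MB I :=
  letI := Classical.propDecidable (∃ ζ : MB I, IsHit a ξ ζ)
  if h : ∃ ζ : MB I, IsHit a ξ ζ then h.choose else .inr ξ

/-- A maximal clique: a maximal element of `(𝒞, ≤)`. -/
noncomputable def IsMaxCl {I : S → S → Prop} (γ : Cl I) : Prop :=
  ∀ δ : Cl I, hLe γ.heap δ.heap → δ.heap = γ.heap

/-- The AST cutting an infinite heap at the first occurrence of a maximal clique. -/
noncomputable def Vmax {I : S → S → Prop} (ξ : Bnd I) : MB I :=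
  letI := Classical.propDecidable
  if h : ∃ k : ℕ, IsMaxCl (ξ.1 k) then .inl (ppSeq ξ.1 (Nat.find h + 1)) else .inr ξ

/-- The ergodic mean `⟨φ, x⟩ / |x|` (junk value `0` on infinite heaps). -/
noncomputable def ratioC {I : S → S → Prop} (φ : S → ℝ) : MB I → ℝ
  | .inl x => pairing φ x / (len x : ℝ)
  | .inr _ => 0

/-- The ratio `φ(x)/|x|` for `φ` defined on heaps (junk value `0` on infinite heaps). -/
noncomputable def ratioH {I : S → S → Prop} (φ : Heap I → ℝ) : MB I → ℝ
  | .inl x => φ x / (len x : ℝ)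
  | .inr _ => 0

/-- The set `ℭ` of nonempty cliques. -/
def NCl (I : S → S → Prop) := {γ : Cl I // γ.1.Nonempty}

instance [Fintype S] (I : S → S → Prop) : Finite (Cl I) :=
  inferInstanceAs (Finite {s : Finset S // ∀ a ∈ s, ∀ b ∈ s, a ≠ b → I a b})

instance [Fintype S] (I : S → S → Prop) : Finite (NCl I) :=
  inferInstanceAs (Finite {γ : Cl I // γ.1.Nonempty})

/-- The valuation `f(x) = ℙ(↑x)` associated with `ℙ`. -/
noncomputable def fval {I : S → S → Prop} (P : Measure (Bnd I)) (x : Heap I) : ℝ :=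
  (P (cyl x)).toReal

open Classical in
/-- The Möbius transform `h` of the valuation `f` associated with `ℙ`. -/
noncomputable def mobius {I : S → S → Prop} (P : Measure (Bnd I)) (γ : Cl I) : ℝ :=
  ∑ᶠ γ' : Cl I,
    if hLe γ.heap γ'.heap then (-1 : ℝ) ^ (γ'.1.card - γ.1.card) * fval P γ'.heap else 0

open Classical in
/-- The normalization `g(γ) = Σ_{γ'∈ℭ, γ→γ'} h(γ')`. -/
noncomputable def gnorm {I : S → S → Prop} (P : Measure (Bnd I)) (γ : Cl I) : ℝ :=
  ∑ᶠ γ' : Cl I, if γ'.1.Nonempty ∧ Move γ γ' then mobius P γ' else 0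

open Classical in
/-- The transition matrix of the Markov chain of cliques. -/
noncomputable def Pmat {I : S → S → Prop} (P : Measure (Bnd I)) (γ γ' : Cl I) : ℝ :=
  if Move γ γ' then mobius P γ' / gnorm P γ else 0

/-- `π` is a stationary probability distribution, carried by the nonempty cliques, of the
Markov chain of cliques. -/
noncomputable def IsStationary {I : S → S → Prop} (P : Measure (Bnd I)) (π : Cl I → ℝ) :
    Prop :=
  (∀ γ : Cl I, 0 ≤ π γ) ∧ (π (emptyCl I) = 0) ∧ (∑ᶠ γ : Cl I, π γ = 1) ∧
    ∀ γ' : Cl I, π γ' = ∑ᶠ γ : Cl I, π γ * Pmat P γ γ'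

open Classical in
/-- The nonnegative matrix `B` on `ℭ×ℭ`: `B_{γ,γ'} = f(γ')` if `γ → γ'`, else `0`. -/
noncomputable def Bmat {I : S → S → Prop} (P : Measure (Bnd I)) :
    Matrix (NCl I) (NCl I) ℝ :=
  fun γ γ' => if Move γ.1 γ'.1 then fval P γ'.1.heap else 0

/-- The spectral radius of `B` (as a complex matrix). -/
noncomputable def specRadB [Fintype S] {I : S → S → Prop} (P : Measure (Bnd I)) : ℝ≥0∞ :=
  letI : Fintype (NCl I) := Fintype.ofFinite _
  letI : DecidableEq (NCl I) := Classical.decEq _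
  spectralRadius ℂ ((Bmat P).map (algebraMap ℝ ℂ))

/-- The height `τ(x)` of a heap: the number of cliques in its Cartier–Foata decomposition. -/
noncomputable def height {I : S → S → Prop} (x : Heap I) : ℕ :=
  sInf {N : ℕ | ∀ n, N ≤ n → cf I x n = emptyCl I}

/-- The ratio `|x|/τ(x)` (junk value `0` on infinite heaps). -/
noncomputable def speedRatio {I : S → S → Prop} : MB I → ℝ
  | .inl x => (len x : ℝ) / (height x : ℝ)
  | .inr _ => 0

/-- `ψ ∘ θ_V` extended by `0` outside the domain of `θ_V`. -/
noncomputable def extShift {I : S → S → Prop} (V : Bnd I → MB I) (ψ : Bnd I → ℝ)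
    (η : Bnd I) : ℝ :=
  match V η with
  | .inl _ => ψ (shiftV V η)
  | .inr _ => 0

section FinAux

set_option linter.unusedSectionVars false

variable {I : S → S → Prop} [DecidableEq S]

/-- Make a heap from a word (list of pieces). -/
def hmk (I : S → S → Prop) (w : List S) : Heap I :=
  (FreeMonoid.ofList w : (HeapCon I).Quotient)

lemma hmk_mul (w₁ w₂ : List S) : hmk I (w₁ ++ w₂) = hmk I w₁ * hmk I w₂ := by
  rw [hmk, FreeMonoid.ofList_append]
  exact Con.coe_mul _ _

lemma hmk_nil : hmk I [] = 1 := rfl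

lemma hmk_eq_iff {w₁ w₂ : List S} :
    hmk I w₁ = hmk I w₂ ↔ (HeapCon I) (FreeMonoid.ofList w₁) (FreeMonoid.ofList w₂) :=
  Con.eq _

/-- A representative word of a heap. -/
noncomputable def hrep (x : Heap I) : List S :=
  FreeMonoid.toList (Quotient.out (x : (HeapCon I).Quotient))

lemma hmk_hrep (x : Heap I) : hmk I (hrep x) = x := Quotient.out_eq' _

/-- The projection of a word on a pair of letters. -/
def pfil (a b : S) (w : List S) : List S := w.filter (fun c => c = a ∨ c = b)

lemma pfil_append (a b : S) (w₁ w₂ : List S) :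
    pfil a b (w₁ ++ w₂) = pfil a b w₁ ++ pfil a b w₂ := List.filter_append _ _

lemma mem_pfil {a b c : S} {w : List S} : c ∈ pfil a b w ↔ c ∈ w ∧ (c = a ∨ c = b) := by
  simp [pfil]

lemma pfil_invariant (hirr : ∀ a : S, ¬ I a a) (hsymm : ∀ a b : S, I a b → I b a)
    {w₁ w₂ : FreeMonoid S}
    (h : ConGen.Rel (CommRel I) w₁ w₂) {a b : S} (hd : ¬ I a b) :
    pfil a b (FreeMonoid.toList w₁) = pfil a b (FreeMonoid.toList w₂) := by
  induction h with
  | of x y hxy =>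
    obtain ⟨c, d, hcd, rfl, rfl⟩ := hxy
    have hcd' : c ≠ d := fun h => hirr c (h ▸ hcd)
    show pfil a b [c, d] = pfil a b [d, c]
    rcases Decidable.em (c = a ∨ c = b) with hc | hc
    · rcases Decidable.em (d = a ∨ d = b) with hdm | hdm
      · exfalso
        rcases hc with rfl | rfl <;> rcases hdm with rfl | rfl
        · exact hcd' rfl
        · exact hd hcd
        · exact hd (hsymm _ _ hcd)
        · exact hcd' rfl
      · simp [pfil, hc, hdm]
    · rcases Decidable.em (d = a ∨ d = b) with hdm | hdm <;> simp [pfil, hc, hdm]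
  | refl => rfl
  | symm _ ih => exact ih.symm
  | trans _ _ ih₁ ih₂ => exact ih₁.trans ih₂
  | mul _ _ ih₁ ih₂ =>
    rw [FreeMonoid.toList_mul, FreeMonoid.toList_mul, pfil_append, pfil_append, ih₁, ih₂]

/-- Projection of a heap on a pair of letters. -/
noncomputable def pr (a b : S) (x : Heap I) : List S := pfil a b (hrep x)

lemma pr_hmk (hirr : ∀ a : S, ¬ I a a) (hsymm : ∀ a b : S, I a b → I b a)
    {a b : S} (hd : ¬ I a b) (w : List S) :
    pr a b (hmk I w) = pfil a b w := by
  have h : hmk I (hrep (hmk I w)) = hmk I w := hmk_hrep _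
  exact pfil_invariant hirr hsymm (hmk_eq_iff.1 h) hd

lemma pr_mul (hirr : ∀ a : S, ¬ I a a) (hsymm : ∀ a b : S, I a b → I b a)
    {a b : S} (hd : ¬ I a b) (x y : Heap I) :
    pr a b (x * y) = pr a b x ++ pr a b y := by
  conv_lhs => rw [← hmk_hrep x, ← hmk_hrep y, ← hmk_mul]
  rw [pr_hmk hirr hsymm hd, pfil_append]
  rfl

lemma pr_one (hirr : ∀ a : S, ¬ I a a) (hsymm : ∀ a b : S, I a b → I b a)
    {a b : S} (hd : ¬ I a b) :
    pr a b (1 : Heap I) = [] := pr_hmk hirr hsymm hd []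

end FinAux

section HLeBasic

variable {I : S → S → Prop}

lemma hLe_refl (x : Heap I) : hLe x x := ⟨1, (mul_one x).symm⟩

lemma hLe_trans {x y z : Heap I} (h1 : hLe x y) (h2 : hLe y z) : hLe x z := by
  obtain ⟨u, rfl⟩ := h1; obtain ⟨v, rfl⟩ := h2
  exact ⟨u * v, mul_assoc _ _ _⟩

lemma hLe_mul_right (x z : Heap I) : hLe x (x * z) := ⟨z, rfl⟩

lemma hLe_one (x : Heap I) : hLe 1 x := ⟨x, (one_mul x).symm⟩

lemma hLe_mul_left {x y : Heap I} (z : Heap I) (h : hLe x y) : hLe (z * x) (z * y) := by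
  obtain ⟨t, rfl⟩ := h
  exact ⟨t, (mul_assoc _ _ _).symm⟩

end HLeBasic

section FinAux2

set_option linter.unusedSectionVars false

variable {I : S → S → Prop} [DecidableEq S]
variable (hirr : ∀ a : S, ¬ I a a) (hsymm : ∀ a b : S, I a b → I b a)

lemma heapCon_cons_comm {a c : S} (h : I c a) (w : List S) :
    hmk I (c :: a :: w) = hmk I (a :: c :: w) := by
  have h1 : hmk I [c, a] = hmk I [a, c] :=
    hmk_eq_iff.2 (ConGen.Rel.of _ _ ⟨c, a, h, rfl, rfl⟩)
  have e1 : (c :: a :: w) = [c, a] ++ w := rfl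
  have e2 : (a :: c :: w) = [a, c] ++ w := rfl
  rw [e1, e2, hmk_mul, hmk_mul, h1]

lemma addExt_hmk {A : Type} [AddCommMonoid A] (φ : S → A) (w : List S) :
    addExt φ (hmk I w) = (w.map φ).sum := by
  show Multiplicative.toAdd ((FreeMonoid.lift fun a => Multiplicative.ofAdd (φ a))
    (FreeMonoid.ofList w)) = _
  rw [FreeMonoid.lift_ofList]
  induction w with
  | nil => simp
  | cons c r ih => simp only [List.map_cons, List.prod_cons, List.sum_cons, toAdd_mul, ih,
      toAdd_ofAdd]

lemma len_hmk (w : List S) : len (hmk I w) = w.length := by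
  rw [len, addExt_hmk]
  induction w with
  | nil => rfl
  | cons c r ih => simp [ih, Nat.add_comm]

lemma len_mul (x y : Heap I) : len (x * y) = len x + len y := by
  calc len (x * y) = len (hmk I (hrep x ++ hrep y)) := by rw [hmk_mul, hmk_hrep, hmk_hrep]
  _ = (hrep x).length + (hrep y).length := by rw [len_hmk, List.length_append]
  _ = len x + len y := by
      rw [← len_hmk (I := I) (w := hrep x), ← len_hmk (I := I) (w := hrep y),
        hmk_hrep, hmk_hrep]

lemma len_eq_zero {x : Heap I} (h : len x = 0) : x = 1 := by
  have h1 : len (hmk I (hrep x)) = (hrep x).length := len_hmk _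
  rw [hmk_hrep] at h1
  rw [h] at h1
  have : hrep x = [] := List.length_eq_zero_iff.1 h1.symm
  rw [← hmk_hrep x, this, hmk_nil]

lemma hLe_len {x y : Heap I} (h : hLe x y) : len x ≤ len y := by
  obtain ⟨z, rfl⟩ := h
  rw [len_mul]
  exact Nat.le_add_right _ _

lemma hLe_eq_of_len {x y : Heap I} (h : hLe x y) (hlen : len y ≤ len x) : x = y := by
  obtain ⟨z, rfl⟩ := h
  rw [len_mul] at hlen
  have : len z = 0 := by omega
  rw [len_eq_zero this, mul_one]

include hirr hsymm

lemma extract_head : ∀ (w : List S) (a : S),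
    (∀ d, ¬ I a d → ∃ t, pfil a d w = a :: t) →
    ∃ w', hmk I w = hmk I (a :: w') := by
  intro w
  induction w with
  | nil =>
    intro a h
    obtain ⟨t, ht⟩ := h a (hirr a)
    simp [pfil] at ht
  | cons c r ih =>
    intro a h
    by_cases hca : c = a
    · subst hca; exact ⟨r, rfl⟩
    · have hIac : I a c := by
        by_contra hnI
        obtain ⟨t, ht⟩ := h c hnI
        have he : pfil a c (c :: r) = c :: pfil a c r := by simp [pfil]
        rw [he] at ht
        exact hca (by injection ht with h1 h2)
      obtain ⟨r', hr'⟩ := ih a (fun d hd => by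
        have hcd : c ≠ d := fun hh => hd (hh ▸ hIac)
        obtain ⟨t, ht⟩ := h d hd
        have he : pfil a d (c :: r) = pfil a d r := by simp [pfil, hca, hcd]
        rw [he] at ht
        exact ⟨t, ht⟩)
      have h1 : hmk I (c :: r) = hmk I (c :: a :: r') := by
        have e1 : c :: r = [c] ++ r := rfl
        have e2 : c :: a :: r' = [c] ++ (a :: r') := rfl
        rw [e1, e2, hmk_mul, hmk_mul, hr']
      exact ⟨c :: r', by rw [h1, heapCon_cons_comm (hsymm a c hIac)]⟩

lemma heap_eq_of_pfil : ∀ (w₁ w₂ : List S),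
    (∀ a b, ¬ I a b → pfil a b w₁ = pfil a b w₂) → hmk I w₁ = hmk I w₂ := by
  intro w₁
  induction w₁ with
  | nil =>
    intro w₂ h
    have hw2 : w₂ = [] := by
      by_contra hne
      obtain ⟨c, hc⟩ := List.exists_mem_of_ne_nil w₂ hne
      have h1 := h c c (hirr c)
      have hmem : c ∈ pfil c c w₂ := mem_pfil.2 ⟨hc, Or.inl rfl⟩
      rw [← h1] at hmem
      simp [pfil] at hmem
    rw [hw2]
  | cons a t ih =>
    intro w₂ h
    have hready : ∀ d, ¬ I a d → ∃ t', pfil a d w₂ = a :: t' := by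
      intro d hd
      rw [← h a d hd]
      exact ⟨pfil a d t, by simp [pfil]⟩
    obtain ⟨w₂', hw₂⟩ := extract_head hirr hsymm w₂ a hready
    have hfil : ∀ e b, ¬ I e b → pfil e b t = pfil e b w₂' := by
      intro e b hb
      have h2 : pfil e b w₂ = pfil e b (a :: w₂') :=
        pfil_invariant hirr hsymm (hmk_eq_iff.1 hw₂) hb
      have h3 : pfil e b (a :: t) = pfil e b w₂ := h e b hb
      by_cases hae : a = e ∨ a = b
      · have e1 : pfil e b (a :: t) = a :: pfil e b t := by simp [pfil, hae]
        have e2 : pfil e b (a :: w₂') = a :: pfil e b w₂' := by simp [pfil, hae]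
        have h4 := h3.trans (h2.trans e2)
        rw [e1] at h4
        injection h4 with h5 h6
      · push_neg at hae
        have e1 : pfil e b (a :: t) = pfil e b t := by simp [pfil, hae.1, hae.2]
        have e2 : pfil e b (a :: w₂') = pfil e b w₂' := by simp [pfil, hae.1, hae.2]
        rw [e1] at h3; rw [e2] at h2
        exact h3.trans h2
    have hind := ih w₂' hfil
    calc hmk I (a :: t) = hmk I ([a] ++ t) := rfl
    _ = hmk I [a] * hmk I t := hmk_mul _ _
    _ = hmk I [a] * hmk I w₂' := by rw [hind]
    _ = hmk I ([a] ++ w₂') := (hmk_mul _ _).symm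
    _ = hmk I w₂ := hw₂.symm

lemma heap_ext {x y : Heap I} (h : ∀ a b, ¬ I a b → pr a b x = pr a b y) : x = y := by
  rw [← hmk_hrep x, ← hmk_hrep y]
  exact heap_eq_of_pfil hirr hsymm _ _ (fun a b hb => h a b hb)

lemma heap_cancel_left {z x y : Heap I} (h : z * x = z * y) : x = y := by
  apply heap_ext hirr hsymm
  intro a b hb
  have h1 : pr a b (z * x) = pr a b (z * y) := by rw [h]
  rw [pr_mul hirr hsymm hb, pr_mul hirr hsymm hb] at h1
  exact List.append_cancel_left h1

lemma pc_le_iff {a : S} {x : Heap I} :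
    hLe (hmk I [a]) x ↔ ∀ d, ¬ I a d → ∃ t, pr a d x = a :: t := by
  constructor
  · rintro ⟨z, rfl⟩ d hd
    rw [pr_mul hirr hsymm hd, pr_hmk hirr hsymm hd]
    exact ⟨pr a d z, by simp [pfil]⟩
  · intro h
    obtain ⟨w', hw'⟩ := extract_head hirr hsymm (hrep x) a (fun d hd => h d hd)
    refine ⟨hmk I w', ?_⟩
    rw [← hmk_hrep x, hw']
    exact hmk_mul [a] w'

end FinAux2

section FinAux3

set_option linter.unusedSectionVars false

variable {I : S → S → Prop} [DecidableEq S]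
variable (hirr : ∀ a : S, ¬ I a a) (hsymm : ∀ a b : S, I a b → I b a)

lemma pfil_comm {a b : S} (w : List S) : pfil a b w = pfil b a w :=
  List.filter_congr (fun c _ => by by_cases h1 : c = a <;> by_cases h2 : c = b <;>
    simp [h1, h2])

lemma pfil_self_ne_nil {a : S} {w : List S} (h : a ∈ w) : pfil a a w ≠ [] := by
  intro hnil
  have : a ∈ pfil a a w := mem_pfil.2 ⟨h, Or.inl rfl⟩
  rw [hnil] at this
  exact List.not_mem_nil this

lemma pfil_self_nil {a : S} {w : List S} (h : a ∉ w) : pfil a a w = [] := by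
  apply List.filter_eq_nil_iff.2
  intro c hc
  simp only [decide_eq_true_eq]
  rintro (rfl | rfl) <;> exact h hc

lemma head_of_append_cons {α : Type*} {l₁ l₂ t : List α} {a c : α} {w : List α}
    (h : l₁ ++ l₂ = a :: t) (hl : l₁ = c :: w) : c = a := by
  rw [hl] at h
  injection h with h1 _

include hirr hsymm

lemma mem_hrep_hmk {c : S} {w : List S} : c ∈ hrep (hmk I w) ↔ c ∈ w := by
  have h : pr c c (hmk I w) = pfil c c w := pr_hmk hirr hsymm (hirr c) w
  constructor
  · intro hc
    by_contra hw
    have h3 : pfil c c (hrep (hmk I w)) = [] := by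
      show pr c c (hmk I w) = []
      rw [h]
      exact pfil_self_nil hw
    exact pfil_self_ne_nil hc h3
  · intro hc
    by_contra hw
    have h3 : pfil c c w = [] := by rw [← h]; exact pfil_self_nil hw
    exact pfil_self_ne_nil hc h3

lemma mem_hrep_mul {c : S} {x y : Heap I} :
    c ∈ hrep (x * y) ↔ c ∈ hrep x ∨ c ∈ hrep y := by
  have hcc : ¬ I c c := hirr c
  have h : pr c c (x * y) = pr c c x ++ pr c c y := pr_mul hirr hsymm hcc x y
  constructor
  · intro hc
    by_contra hw
    push_neg at hw
    have h1 : pr c c x = [] := pfil_self_nil hw.1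
    have h2 : pr c c y = [] := pfil_self_nil hw.2
    have : pr c c (x * y) = [] := by rw [h, h1, h2]; rfl
    exact pfil_self_ne_nil hc this
  · intro hc
    by_contra hw
    have h0 : pr c c (x * y) = [] := pfil_self_nil hw
    rw [h0] at h
    rcases List.append_eq_nil_iff.1 h.symm with ⟨h1, h2⟩
    rcases hc with hc | hc
    · exact pfil_self_ne_nil hc h1
    · exact pfil_self_ne_nil hc h2

lemma mem_hrep_of_le {c : S} {x y : Heap I} (h : hLe x y) (hc : c ∈ hrep x) :
    c ∈ hrep y := by
  obtain ⟨z, rfl⟩ := h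
  exact (mem_hrep_mul hirr hsymm).2 (Or.inl hc)

lemma comm_word {b : S} : ∀ w : List S, (∀ c ∈ w, I b c) →
    hmk I (b :: w) = hmk I (w ++ [b]) := by
  intro w
  induction w with
  | nil => intro _; rfl
  | cons c r ih =>
    intro h
    have h1 : hmk I (b :: c :: r) = hmk I (c :: b :: r) :=
      heapCon_cons_comm (h c List.mem_cons_self) r
    have h2 : hmk I (b :: r) = hmk I (r ++ [b]) := ih (fun d hd => h d (List.mem_cons_of_mem _ hd))
    calc hmk I (b :: c :: r) = hmk I (c :: b :: r) := h1
    _ = hmk I ([c] ++ (b :: r)) := rfl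
    _ = hmk I [c] * hmk I (b :: r) := hmk_mul _ _
    _ = hmk I [c] * hmk I (r ++ [b]) := by rw [h2]
    _ = hmk I ([c] ++ (r ++ [b])) := (hmk_mul _ _).symm
    _ = hmk I ((c :: r) ++ [b]) := rfl

lemma mul_comm_single {b : S} {x : Heap I} (h : ∀ c ∈ hrep x, I b c) :
    hmk I [b] * x = x * hmk I [b] := by
  conv_lhs => rw [← hmk_hrep x]
  conv_rhs => rw [← hmk_hrep x]
  rw [← hmk_mul, ← hmk_mul]
  exact comm_word hirr hsymm (hrep x) h

lemma pc_le_head {e d : S} {x : Heap I} (hd : ¬ I e d) (h : hLe (hmk I [e]) x) :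
    ∃ t, pr e d x = e :: t := (pc_le_iff hirr hsymm).1 h d hd

lemma pc_le_mul {e : S} {u z : Heap I} (h : hLe (hmk I [e]) (u * z)) :
    hLe (hmk I [e]) u ∨ ((∀ c, ¬ I e c → c ∉ hrep u) ∧ hLe (hmk I [e]) z) := by
  by_cases hu : e ∈ hrep u
  · left
    apply (pc_le_iff hirr hsymm).2
    intro d hd
    obtain ⟨t, ht⟩ := pc_le_head hirr hsymm hd h
    rw [pr_mul hirr hsymm hd] at ht
    rcases hcase : pr e d u with _ | ⟨c0, w⟩
    · exfalso
      have : e ∈ pr e d u := mem_pfil.2 ⟨hu, Or.inl rfl⟩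
      rw [hcase] at this
      exact List.not_mem_nil this
    · have : c0 = e := head_of_append_cons ht hcase
      subst this
      exact ⟨w, rfl⟩
  · have ha : ∀ c, ¬ I e c → c ∉ hrep u := by
      intro c hc hcu
      obtain ⟨t, ht⟩ := pc_le_head hirr hsymm hc h
      rw [pr_mul hirr hsymm hc] at ht
      have hne : pr e c u ≠ [] := by
        intro hnil
        have : c ∈ pfil e c (hrep u) := mem_pfil.2 ⟨hcu, Or.inr rfl⟩
        rw [show pfil e c (hrep u) = pr e c u from rfl, hnil] at this
        exact List.not_mem_nil this
      rcases hcase : pr e c u with _ | ⟨c0, w⟩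
      · exact hne hcase
      · have he : c0 = e := head_of_append_cons ht hcase
        apply hu
        have : c0 ∈ pr e c u := by rw [hcase]; exact List.mem_cons_self
        rw [he] at this
        exact (mem_pfil.1 this).1
    refine Or.inr ⟨ha, (pc_le_iff hirr hsymm).2 ?_⟩
    intro d hd
    obtain ⟨t, ht⟩ := pc_le_head hirr hsymm hd h
    rw [pr_mul hirr hsymm hd] at ht
    have h1 : pr e d u = [] := by
      apply List.filter_eq_nil_iff.2
      intro c hc
      simp only [decide_eq_true_eq]
      rintro (rfl | rfl)
      · exact hu hc
      · exact ha c hd hc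
    rw [h1] at ht
    exact ⟨t, ht⟩

lemma pc_mul_le {a : S} {p w : Heap I} (ha : hLe (hmk I [a]) w) (hp : hLe p w)
    (hind : ∀ c ∈ hrep p, I a c) : hLe (hmk I [a] * p) w := by
  obtain ⟨t, rfl⟩ := hp
  rcases pc_le_mul hirr hsymm ha with hle | ⟨_, hle⟩
  · exfalso
    have : a ∈ hrep p := by
      obtain ⟨t', ht'⟩ := pc_le_head hirr hsymm (hirr a) hle
      have : a ∈ pr a a p := by rw [ht']; exact List.mem_cons_self
      exact (mem_pfil.1 this).1
    exact hirr a (hind a this)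
  · obtain ⟨t', rfl⟩ := hle
    refine ⟨t', ?_⟩
    rw [← mul_assoc, ← mul_comm_single hirr hsymm hind, mul_assoc]

lemma clique_list_le {w : Heap I} : ∀ l : List S, l.Nodup →
    (∀ a ∈ l, ∀ b ∈ l, a ≠ b → I a b) → (∀ a ∈ l, hLe (hmk I [a]) w) →
    hLe (hmk I l) w := by
  intro l
  induction l with
  | nil => intro _ _ _; exact hLe_one _
  | cons a r ih =>
    intro hnd hcl hall
    have hr : hLe (hmk I r) w := ih (List.Nodup.of_cons hnd)
      (fun x hx y hy => hcl x (List.mem_cons_of_mem _ hx) y (List.mem_cons_of_mem _ hy))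
      (fun x hx => hall x (List.mem_cons_of_mem _ hx))
    have hind : ∀ c ∈ hrep (hmk I r), I a c := by
      intro c hc
      have hcr : c ∈ r := (mem_hrep_hmk hirr hsymm).1 hc
      have hca : a ≠ c := fun h => (List.nodup_cons.1 hnd).1 (h ▸ hcr)
      exact hcl a (List.mem_cons_self) c (List.mem_cons_of_mem _ hcr) hca
    have := pc_mul_le hirr hsymm (hall a (List.mem_cons_self)) hr hind
    rw [← hmk_mul] at this
    exact this

end FinAux3

section FinAux4

set_option linter.unusedSectionVars false

variable {I : S → S → Prop} [DecidableEq S]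
variable (hirr : ∀ a : S, ¬ I a a) (hsymm : ∀ a b : S, I a b → I b a)

lemma hmk_perm : ∀ {l l' : List S}, l.Perm l' →
    (∀ x ∈ l, ∀ y ∈ l, hmk I [x] * hmk I [y] = hmk I [y] * hmk I [x]) →
    hmk I l = hmk I l' := by
  intro l l' hp
  induction hp with
  | nil => intro _; rfl
  | cons x hp ih =>
    rename_i l₁ l₂
    intro hc
    have h2 := ih (fun a ha b hb => hc a (List.mem_cons_of_mem _ ha) b
      (List.mem_cons_of_mem _ hb))
    have e1 : hmk I (x :: l₁) = hmk I [x] * hmk I l₁ := hmk_mul [x] l₁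
    have e2 : hmk I (x :: l₂) = hmk I [x] * hmk I l₂ := hmk_mul [x] l₂
    rw [e1, e2, h2]
  | swap x y l =>
    intro hc
    have hxy : hmk I [y] * hmk I [x] = hmk I [x] * hmk I [y] :=
      hc y (by simp) x (by simp)
    calc hmk I (y :: x :: l) = (hmk I [y] * hmk I [x]) * hmk I l := by
          rw [← hmk_mul, ← hmk_mul]; rfl
    _ = (hmk I [x] * hmk I [y]) * hmk I l := by rw [hxy]
    _ = hmk I (x :: y :: l) := by rw [← hmk_mul, ← hmk_mul]; rfl
  | trans hp₁ hp₂ ih₁ ih₂ =>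
    intro hc
    exact (ih₁ hc).trans (ih₂ (fun x hx y hy => hc x (hp₁.mem_iff.mpr hx) y
      (hp₁.mem_iff.mpr hy)))

include hsymm in
lemma indep_hmk_comm {x y : S} (h : I x y) :
    hmk I [x] * hmk I [y] = hmk I [y] * hmk I [x] := by
  rw [← hmk_mul, ← hmk_mul]
  exact (heapCon_cons_comm (hsymm x y h) []).symm

include hsymm in
lemma clique_comm (γ : Cl I) {x y : S} (hx : x ∈ γ.1) (hy : y ∈ γ.1) :
    hmk I [x] * hmk I [y] = hmk I [y] * hmk I [x] := by
  by_cases hxy : x = y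
  · rw [hxy]
  · exact indep_hmk_comm hsymm (γ.2 x hx y hy hxy)

lemma noncommProd_eq_hmk : ∀ (s : Finset S) (f : S → Heap I)
    (hcomm : (s : Set S).Pairwise fun a b => Commute (f a) (f b))
    (hf : ∀ a, f a = hmk I [a]) (l : List S), l.Nodup → (∀ c, c ∈ l ↔ c ∈ s) →
    s.noncommProd f hcomm = hmk I l := by
  intro s
  induction s using Finset.induction_on with
  | empty =>
    intro f hcomm hf l hnd hmem
    have : l = [] := by
      cases l with
      | nil => rfl
      | cons c r => exact absurd ((hmem c).1 (List.mem_cons_self)) (by simp)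
    rw [this, Finset.noncommProd_empty, hmk_nil]
  | @insert a t hat ih =>
    intro f hcomm hf l hnd hmem
    rw [Finset.noncommProd_insert_of_notMem _ _ _ _ hat]
    have hal : a ∈ l := (hmem a).2 (Finset.mem_insert_self _ _)
    have herase : ∀ c, c ∈ l.erase a ↔ c ∈ t := by
      intro c
      rw [List.Nodup.mem_erase_iff hnd, hmem]
      simp only [Finset.mem_insert]
      constructor
      · rintro ⟨h1, h2 | h2⟩
        · exact absurd h2 h1
        · exact h2
      · intro hc
        exact ⟨fun h => hat (h ▸ hc), Or.inr hc⟩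
    have hsub : (↑t : Set S) ⊆ ↑(insert a t : Finset S) := by
      simp only [Finset.coe_insert]
      exact Set.subset_insert a ↑t
    have hIH := ih f (hcomm.mono hsub) hf (l.erase a) (hnd.erase a) herase
    rw [hIH, hf a]
    have hperm : l.Perm (a :: l.erase a) := List.perm_cons_erase hal
    have hcl : ∀ x ∈ l, ∀ y ∈ l, hmk I [x] * hmk I [y] = hmk I [y] * hmk I [x] := by
      intro x hx y hy
      by_cases hxy : x = y
      · rw [hxy]
      · have hx' : x ∈ (insert a t : Finset S) := (hmem x).1 hx
        have hy' : y ∈ (insert a t : Finset S) := (hmem y).1 hy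
        have := hcomm hx' hy' hxy
        rw [← hf x, ← hf y]
        exact this.eq
    rw [hmk_perm hperm hcl]
    exact (hmk_mul [a] (l.erase a)).symm

end FinAux4

section FinAuxPP

set_option linter.unusedSectionVars false

variable {I : S → S → Prop}

lemma ppSeq_zero (c : ℕ → Cl I) : ppSeq c 0 = 1 := rfl

lemma ppSeq_succ (c : ℕ → Cl I) (n : ℕ) :
    ppSeq c (n + 1) = ppSeq c n * (c n).heap := by
  rw [ppSeq, ppSeq, List.range_succ, List.map_append]
  simp

lemma ppSeq_succ_head (c : ℕ → Cl I) (n : ℕ) :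
    ppSeq c (n + 1) = (c 0).heap * ppSeq (fun i => c (i + 1)) n := by
  rw [ppSeq, ppSeq, List.range_succ_eq_map, List.map_cons, List.prod_cons, List.map_map]
  rfl

lemma ppSeq_le {c : ℕ → Cl I} {k n : ℕ} (h : k ≤ n) : hLe (ppSeq c k) (ppSeq c n) := by
  induction h with
  | refl => exact hLe_refl _
  | step h2 ih =>
    refine hLe_trans ih ?_
    rw [ppSeq_succ]
    exact hLe_mul_right _ _

lemma ppSeq_congr {c d : ℕ → Cl I} : ∀ {n : ℕ}, (∀ i, i < n → c i = d i) →
    ppSeq c n = ppSeq d n := by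
  intro n
  induction n with
  | zero => intro _; rfl
  | succ m ih =>
    intro h
    rw [ppSeq_succ, ppSeq_succ, ih (fun i hi => h i (Nat.lt_succ_of_lt hi)),
      h m (Nat.lt_succ_self m)]

lemma emptyCl_heap : (emptyCl I).heap = 1 := by
  show Finset.noncommProd ∅ _ _ = 1
  exact Finset.noncommProd_empty _ _

lemma ppSeq_stab {c : ℕ → Cl I} {N : ℕ} (h : ∀ i, N ≤ i → c i = emptyCl I) :
    ∀ n, N ≤ n → ppSeq c n = ppSeq c N := by
  intro n hn
  induction hn with
  | refl => rfl
  | @step m h2 ih =>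
    rw [ppSeq_succ, h m h2, emptyCl_heap, mul_one, ih]

variable (hCF : ∀ x : Heap I, ∃! c : ℕ → Cl I, CFprop I c x)
include hCF

lemma cf_spec (x : Heap I) : CFprop I (cf I x) x := by
  have h : ∃ c, CFprop I c x := (hCF x).exists
  rw [cf, dif_pos h]
  exact h.choose_spec

lemma cf_eq {c : ℕ → Cl I} {x : Heap I} (h : CFprop I c x) : cf I x = c :=
  (hCF x).unique (cf_spec hCF x) h

lemma pcf_le (x : Heap I) (k : ℕ) : hLe (ppSeq (cf I x) k) x := by
  obtain ⟨hm, N, hN⟩ := cf_spec hCF x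
  have h1 : ppSeq (cf I x) (max k N) = x := (hN _ (le_max_right _ _)).1
  conv_rhs => rw [← h1]
  exact ppSeq_le (le_max_left _ _)

end FinAuxPP

section FinAux5

set_option linter.unusedSectionVars false

variable {I : S → S → Prop} [DecidableEq S]
variable (hirr : ∀ a : S, ¬ I a a) (hsymm : ∀ a b : S, I a b → I b a)

include hsymm in
lemma clique_heap_eq (γ : Cl I) : γ.heap = hmk I γ.1.toList :=
  noncommProd_eq_hmk γ.1 _ _ (fun a => rfl) γ.1.toList (Finset.nodup_toList _)
    (fun c => Finset.mem_toList)

include hsymm in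
lemma len_clique (γ : Cl I) : len γ.heap = γ.1.card := by
  rw [clique_heap_eq hsymm, len_hmk, Finset.length_toList]

include hsymm in
lemma pc_le_clique {a : S} {γ : Cl I} (ha : a ∈ γ.1) : hLe (hmk I [a]) γ.heap := by
  rw [clique_heap_eq hsymm]
  have hperm : γ.1.toList.Perm (a :: γ.1.toList.erase a) :=
    List.perm_cons_erase (Finset.mem_toList.2 ha)
  have hcl : ∀ x ∈ γ.1.toList, ∀ y ∈ γ.1.toList,
      hmk I [x] * hmk I [y] = hmk I [y] * hmk I [x] :=
    fun x hx y hy => clique_comm hsymm γ (Finset.mem_toList.1 hx) (Finset.mem_toList.1 hy)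
  rw [hmk_perm hperm hcl]
  exact ⟨hmk I (γ.1.toList.erase a), hmk_mul [a] _⟩

include hirr hsymm

lemma mem_hrep_clique {c : S} {γ : Cl I} : c ∈ hrep γ.heap ↔ c ∈ γ.1 := by
  rw [clique_heap_eq hsymm, mem_hrep_hmk hirr hsymm]
  exact Finset.mem_toList

lemma not_mem_hrep_one {a : S} : a ∉ hrep (1 : Heap I) := by
  intro h
  exact pfil_self_ne_nil h (pr_one hirr hsymm (hirr a))

lemma mem_hrep_ppSeq {a : S} {c : ℕ → Cl I} : ∀ {n : ℕ},
    a ∈ hrep (ppSeq c n) ↔ ∃ j, j < n ∧ a ∈ (c j).1 := by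
  intro n
  induction n with
  | zero =>
    constructor
    · intro h; exact absurd h (not_mem_hrep_one hirr hsymm)
    · rintro ⟨j, hj, _⟩; omega
  | succ m ih =>
    rw [ppSeq_succ, mem_hrep_mul hirr hsymm, ih, mem_hrep_clique hirr hsymm]
    constructor
    · rintro (⟨j, hj, hja⟩ | hja)
      · exact ⟨j, by omega, hja⟩
      · exact ⟨m, by omega, hja⟩
    · rintro ⟨j, hj, hja⟩
      by_cases hjm : j = m
      · exact Or.inr (hjm ▸ hja)
      · exact Or.inl ⟨j, by omega, hja⟩

lemma pc_le_mem {a : S} {x : Heap I} (h : hLe (hmk I [a]) x) : a ∈ hrep x := by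
  obtain ⟨t, ht⟩ := pc_le_head hirr hsymm (hirr a) h
  have : a ∈ pr a a x := by rw [ht]; exact List.mem_cons_self
  exact (mem_pfil.1 this).1

variable (hCF : ∀ x : Heap I, ∃! c : ℕ → Cl I, CFprop I c x)

end FinAux5

section FinAux5b

set_option linter.unusedSectionVars false

variable {I : S → S → Prop} [DecidableEq S] [Fintype S]
variable (hirr : ∀ a : S, ¬ I a a) (hsymm : ∀ a b : S, I a b → I b a)

/-- The set of minimal pieces of a heap. -/
noncomputable def minf (I : S → S → Prop) [Fintype S] (x : Heap I) : Finset S :=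
  @Finset.filter S (fun a => hLe (hmk I [a]) x) (Classical.decPred _) Finset.univ

lemma mem_minf {x : Heap I} {a : S} : a ∈ minf I x ↔ hLe (hmk I [a]) x := by
  classical
  simp [minf]

lemma minf_mono {x y : Heap I} (h : hLe x y) : minf I x ⊆ minf I y := by
  intro a ha
  rw [mem_minf] at ha ⊢
  exact hLe_trans ha h

variable (hCF : ∀ x : Heap I, ∃! c : ℕ → Cl I, CFprop I c x)

include hirr hsymm hCF in
lemma cf_zero (x : Heap I) : (cf I x 0).1 = minf I x := by
  obtain ⟨hmove, N, hN⟩ := cf_spec hCF x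
  apply Finset.Subset.antisymm
  · intro a ha
    rw [mem_minf]
    have h1 : hLe (hmk I [a]) (cf I x 0).heap := pc_le_clique hsymm ha
    have h2 : hLe (cf I x 0).heap x := by
      have hx : ppSeq (cf I x) (N + 1) = x := (hN (N + 1) (by omega)).1
      conv_rhs => rw [← hx, ppSeq_succ_head]
      exact hLe_mul_right _ _
    exact hLe_trans h1 h2
  · intro a ha
    rw [mem_minf] at ha
    by_contra hnot
    classical
    have hx : ppSeq (cf I x) (N + 1) = x := (hN (N + 1) (by omega)).1
    have hmem : a ∈ hrep x := pc_le_mem hirr hsymm ha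
    have hmem' : a ∈ hrep (ppSeq (cf I x) (N + 1)) := by rw [hx]; exact hmem
    obtain ⟨j0, hj0N, hj0⟩ := (mem_hrep_ppSeq hirr hsymm).1 hmem'
    have hex : ∃ j, a ∈ (cf I x j).1 := ⟨j0, hj0⟩
    set j := Nat.find hex with hjdef
    have hja : a ∈ (cf I x j).1 := Nat.find_spec hex
    have hjmin : ∀ i, i < j → a ∉ (cf I x i).1 := fun i hi => Nat.find_min hex hi
    have hj0' : j ≠ 0 := by
      intro h0
      exact hnot (h0 ▸ hja)
    have hjle : j ≤ N + 1 := Nat.find_le hj0 |>.trans (by omega)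
    obtain ⟨b, hb, hba⟩ := hmove (j - 1) a (by
      have : j - 1 + 1 = j := by omega
      rw [this]; exact hja)
    have hd : ¬ I a b := fun h => hba (hsymm a b h)
    obtain ⟨z, hz⟩ := ppSeq_le (c := cf I x) (show j ≤ N + 1 from hjle)
    rw [hx] at hz
    obtain ⟨t, ht⟩ := pc_le_head hirr hsymm hd ha
    rw [hz, pr_mul hirr hsymm hd] at ht
    have haX : a ∉ hrep (ppSeq (cf I x) j) := by
      intro hmemX
      obtain ⟨j', hj', hja'⟩ := (mem_hrep_ppSeq hirr hsymm).1 hmemX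
      exact hjmin j' hj' hja'
    have hbX : b ∈ pr a b (ppSeq (cf I x) j) := by
      apply mem_pfil.2
      refine ⟨?_, Or.inr rfl⟩
      apply (mem_hrep_ppSeq hirr hsymm).2
      exact ⟨j - 1, by omega, hb⟩
    rcases hcase : pr a b (ppSeq (cf I x) j) with _ | ⟨x₀, X'⟩
    · rw [hcase] at hbX
      exact List.not_mem_nil hbX
    · have hx₀ : x₀ = a := head_of_append_cons ht hcase
      apply haX
      have : x₀ ∈ pr a b (ppSeq (cf I x) j) := by rw [hcase]; exact List.mem_cons_self
      rw [hx₀] at this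
      exact (mem_pfil.1 this).1

end FinAux5b

section FinAux6

set_option linter.unusedSectionVars false

variable {I : S → S → Prop} [DecidableEq S] [Fintype S]
variable (hirr : ∀ a : S, ¬ I a a) (hsymm : ∀ a b : S, I a b → I b a)
variable (hCF : ∀ x : Heap I, ∃! c : ℕ → Cl I, CFprop I c x)

omit hirr hsymm in
include hCF in
lemma cf_tail (x : Heap I) :
    ∃ x', x = (cf I x 0).heap * x' ∧ cf I x' = fun k => cf I x (k + 1) := by
  obtain ⟨hmove, N, hN⟩ := cf_spec hCF x
  have hstab : ∀ i, N ≤ i → (fun k => cf I x (k + 1)) i = emptyCl I :=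
    fun i hi => (hN (i + 1) (by omega)).2
  refine ⟨ppSeq (fun k => cf I x (k + 1)) N, ?_, ?_⟩
  · have h1 : ppSeq (cf I x) (N + 1) = x := (hN (N + 1) (by omega)).1
    conv_lhs => rw [← h1]
    exact ppSeq_succ_head _ _
  · exact cf_eq hCF ⟨fun n => hmove (n + 1), N, fun n hn => ⟨ppSeq_stab hstab n hn, hstab n hn⟩⟩

/-- Remove the minimal pieces of a heap. -/
noncomputable def msub (I : S → S → Prop) [DecidableEq S] [Fintype S] (x : Heap I) :
    Heap I :=
  letI := Classical.propDecidable (∃ x', x = hmk I (minf I x).toList * x')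
  if h : ∃ x', x = hmk I (minf I x).toList * x' then h.choose else 1

include hirr hsymm

lemma minf_clique {x : Heap I} : ∀ a ∈ minf I x, ∀ b ∈ minf I x, a ≠ b → I a b := by
  intro a ha b hb hab
  by_contra hnI
  have hnI' : ¬ I b a := fun h => hnI (hsymm b a h)
  rw [mem_minf] at ha hb
  obtain ⟨t, ht⟩ := pc_le_head hirr hsymm hnI ha
  obtain ⟨t', ht'⟩ := pc_le_head hirr hsymm hnI' hb
  have hco : pr b a x = pr a b x := pfil_comm (hrep x)
  rw [ht, ht'] at hco
  injection hco with h1 _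
  exact hab h1.symm

lemma mheap_le (x : Heap I) : hLe (hmk I (minf I x).toList) x :=
  clique_list_le hirr hsymm _ (Finset.nodup_toList _)
    (fun a ha b hb hab => minf_clique hirr hsymm a (Finset.mem_toList.1 ha) b
      (Finset.mem_toList.1 hb) hab)
    (fun a ha => mem_minf.1 (Finset.mem_toList.1 ha))

lemma msub_spec (x : Heap I) : x = hmk I (minf I x).toList * msub I x := by
  have h : ∃ x', x = hmk I (minf I x).toList * x' := mheap_le hirr hsymm x
  rw [msub, dif_pos h]
  exact h.choose_spec

lemma msub_eq {x t : Heap I} (h : x = hmk I (minf I x).toList * t) : msub I x = t := by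
  apply heap_cancel_left hirr hsymm (z := hmk I (minf I x).toList)
  rw [← msub_spec hirr hsymm x, ← h]

include hCF in
lemma cf_zero_heap (x : Heap I) : (cf I x 0).heap = hmk I (minf I x).toList := by
  rw [clique_heap_eq hsymm, cf_zero hirr hsymm hCF x]

include hCF in
lemma msub_cf (x : Heap I) : cf I (msub I x) = fun k => cf I x (k + 1) := by
  obtain ⟨x', hx', hcf'⟩ := cf_tail hCF x
  have hmx : msub I x = x' := msub_eq hirr hsymm (by
    rw [← cf_zero_heap hirr hsymm hCF x]; exact hx')
  rw [hmx, hcf']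

include hCF in
lemma pcf_succ (x : Heap I) (k : ℕ) :
    ppSeq (cf I x) (k + 1) = hmk I (minf I x).toList * ppSeq (cf I (msub I x)) k := by
  rw [ppSeq_succ_head, cf_zero_heap hirr hsymm hCF, ← msub_cf hirr hsymm hCF]

lemma pc_le_single {a b : S} (h : hLe (hmk I [a]) (hmk I [b])) : a = b := by
  have h1 := pc_le_mem hirr hsymm h
  have h2 := (mem_hrep_hmk hirr hsymm).1 h1
  simpa using h2

lemma hmk_comm_of_indep : ∀ (l : List S) {x : Heap I},
    (∀ e ∈ l, ∀ c ∈ hrep x, I e c) → hmk I l * x = x * hmk I l := by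
  intro l
  induction l with
  | nil => intro x _; rw [hmk_nil, one_mul, mul_one]
  | cons e r ih =>
    intro x h
    have e1 : hmk I (e :: r) = hmk I [e] * hmk I r := hmk_mul [e] r
    rw [e1, mul_assoc, ih (fun e' he' c hc => h e' (List.mem_cons_of_mem _ he') c hc),
      ← mul_assoc, mul_comm_single hirr hsymm (h e (List.mem_cons_self)), mul_assoc]

lemma minf_mul_fresh {w : Heap I} {b : S} (hf : ∀ c, ¬ I b c → c ∉ hrep w) :
    minf I (w * hmk I [b]) = insert b (minf I w) := by
  have hcomm : hmk I [b] * w = w * hmk I [b] := mul_comm_single hirr hsymm (fun c hc => by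
    by_contra hnI; exact hf c hnI hc)
  ext a
  rw [Finset.mem_insert, mem_minf]
  constructor
  · intro h
    rcases pc_le_mul hirr hsymm h with h1 | ⟨_, h2⟩
    · exact Or.inr (mem_minf.2 h1)
    · exact Or.inl (pc_le_single hirr hsymm h2)
  · rintro (rfl | h)
    · exact ⟨w, hcomm.symm⟩
    · exact hLe_trans (mem_minf.1 h) (hLe_mul_right _ _)

lemma minf_mul_notfresh {w : Heap I} {b : S} (hf : ¬ ∀ c, ¬ I b c → c ∉ hrep w) :
    minf I (w * hmk I [b]) = minf I w := by
  ext a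
  rw [mem_minf, mem_minf]
  constructor
  · intro h
    rcases pc_le_mul hirr hsymm h with h1 | ⟨hind, h2⟩
    · exact h1
    · exfalso
      have hab : a = b := pc_le_single hirr hsymm h2
      subst hab
      exact hf hind
  · intro h
    exact hLe_trans h (hLe_mul_right _ _)

lemma hmk_toList_insert {s : Finset S} {b : S} (hb : b ∉ s)
    (hcl : ∀ x ∈ insert b s, ∀ y ∈ insert b s, x ≠ y → I x y) :
    hmk I (insert b s).toList = hmk I s.toList * hmk I [b] := by
  have hperm : (insert b s).toList.Perm (b :: s.toList) := Finset.toList_insert hb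
  have hcomm : ∀ x ∈ (insert b s).toList, ∀ y ∈ (insert b s).toList,
      hmk I [x] * hmk I [y] = hmk I [y] * hmk I [x] := by
    intro x hx y hy
    by_cases hxy : x = y
    · rw [hxy]
    · exact indep_hmk_comm hsymm (hcl x (Finset.mem_toList.1 hx) y (Finset.mem_toList.1 hy) hxy)
  rw [hmk_perm hperm hcomm]
  rw [comm_word hirr hsymm s.toList (fun c hc => hcl b (Finset.mem_insert_self _ _) c
    (Finset.mem_insert.2 (Or.inr (Finset.mem_toList.1 hc)))
    (fun h => hb (h ▸ (Finset.mem_toList.1 hc))))]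
  exact hmk_mul _ _

lemma msub_step (w : Heap I) (b : S) : hLe (msub I w) (msub I (w * hmk I [b])) := by
  by_cases hf : ∀ c, ¬ I b c → c ∉ hrep w
  · have hmf := minf_mul_fresh hirr hsymm hf
    have hbmem : b ∉ minf I w := by
      intro hb
      exact hf b (hirr b) (pc_le_mem hirr hsymm (mem_minf.1 hb))
    have hIbw : ∀ c ∈ hrep w, I b c := fun c hc => by
      by_contra hnI; exact hf c hnI hc
    have hpieces : ∀ c ∈ hrep (msub I w), I b c := by
      intro c hc
      apply hIbw
      have h2 : c ∈ hrep (hmk I (minf I w).toList * msub I w) :=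
        (mem_hrep_mul hirr hsymm).2 (Or.inr hc)
      rwa [← msub_spec hirr hsymm w] at h2
    have hclI : ∀ x ∈ insert b (minf I w), ∀ y ∈ insert b (minf I w), x ≠ y → I x y := by
      intro x hx y hy hxy
      rcases Finset.mem_insert.1 hx with rfl | hx'
      · rcases Finset.mem_insert.1 hy with rfl | hy'
        · exact absurd rfl hxy
        · exact hIbw y (pc_le_mem hirr hsymm (mem_minf.1 hy'))
      · rcases Finset.mem_insert.1 hy with rfl | hy'
        · exact hsymm _ _ (hIbw x (pc_le_mem hirr hsymm (mem_minf.1 hx')))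
        · exact minf_clique hirr hsymm x hx' y hy' hxy
    have heq : w * hmk I [b] = hmk I (minf I (w * hmk I [b])).toList * msub I w := by
      rw [hmf, hmk_toList_insert hirr hsymm hbmem hclI]
      calc w * hmk I [b] = (hmk I (minf I w).toList * msub I w) * hmk I [b] := by
            conv_lhs => rw [msub_spec hirr hsymm w]
      _ = hmk I (minf I w).toList * (msub I w * hmk I [b]) := mul_assoc _ _ _
      _ = hmk I (minf I w).toList * (hmk I [b] * msub I w) := by
            rw [mul_comm_single hirr hsymm hpieces]
      _ = (hmk I (minf I w).toList * hmk I [b]) * msub I w := (mul_assoc _ _ _).symm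
    rw [msub_eq hirr hsymm heq]
    exact hLe_refl _
  · have hmf := minf_mul_notfresh hirr hsymm hf
    have heq : w * hmk I [b] = hmk I (minf I (w * hmk I [b])).toList *
        (msub I w * hmk I [b]) := by
      rw [hmf]
      conv_lhs => rw [msub_spec hirr hsymm w]
      exact mul_assoc _ _ _
    rw [msub_eq hirr hsymm heq]
    exact hLe_mul_right _ _

lemma msub_mono {u v : Heap I} (h : hLe u v) : hLe (msub I u) (msub I v) := by
  obtain ⟨z, rfl⟩ := h
  have hgen : ∀ l : List S, hLe (msub I u) (msub I (u * hmk I l)) := by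
    intro l
    induction l using List.reverseRecOn with
    | nil => rw [hmk_nil, mul_one]; exact hLe_refl _
    | append_singleton l' b ih =>
      have e1 : u * hmk I (l' ++ [b]) = (u * hmk I l') * hmk I [b] := by
        rw [hmk_mul, mul_assoc]
      rw [e1]
      exact hLe_trans ih (msub_step hirr hsymm (u * hmk I l') b)
  have hz := hgen (hrep z)
  rwa [hmk_hrep] at hz

include hCF in
lemma pcf_mono : ∀ (k : ℕ) {u v : Heap I}, hLe u v →
    hLe (ppSeq (cf I u) k) (ppSeq (cf I v) k) := by
  intro k
  induction k with
  | zero => intro u v _; exact hLe_refl _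
  | succ k ih =>
    intro u v h
    have hsub : minf I u ⊆ minf I v := minf_mono h
    obtain ⟨t, ht⟩ := ih (msub_mono hirr hsymm h)
    have hdisj : Disjoint (minf I u) (minf I v \ minf I u) := Finset.disjoint_sdiff
    have hunion : minf I u ∪ (minf I v \ minf I u) = minf I v :=
      Finset.union_sdiff_of_subset hsub
    have hndγε : ((minf I u).toList ++ (minf I v \ minf I u).toList).Nodup := by
      rw [List.nodup_append]
      exact ⟨Finset.nodup_toList _, Finset.nodup_toList _,
        fun a ha b hb hab => (Finset.disjoint_left.1 hdisj (Finset.mem_toList.1 ha))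
          (by subst hab; exact Finset.mem_toList.1 hb)⟩
    have hperm : (minf I v).toList.Perm
        ((minf I u).toList ++ (minf I v \ minf I u).toList) := by
      apply List.perm_of_nodup_nodup_toFinset_eq (Finset.nodup_toList _) hndγε
      rw [Finset.toList_toFinset, List.toFinset_append, Finset.toList_toFinset,
        Finset.toList_toFinset, hunion]
    have hcomm : ∀ x ∈ (minf I v).toList, ∀ y ∈ (minf I v).toList,
        hmk I [x] * hmk I [y] = hmk I [y] * hmk I [x] := by
      intro x hx y hy
      by_cases hxy : x = y
      · rw [hxy]
      · exact indep_hmk_comm hsymm (minf_clique hirr hsymm x (Finset.mem_toList.1 hx) y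
          (Finset.mem_toList.1 hy) hxy)
    have f1 : hmk I (minf I v).toList =
        hmk I (minf I u).toList * hmk I (minf I v \ minf I u).toList := by
      rw [hmk_perm hperm hcomm]
      exact hmk_mul _ _
    obtain ⟨z, hz⟩ := h
    have f2 : ∀ e ∈ (minf I v \ minf I u), ∀ c ∈ hrep u, I e c := by
      intro e he c hc
      have heδ : e ∈ minf I v := (Finset.mem_sdiff.1 he).1
      have heγ : e ∉ minf I u := (Finset.mem_sdiff.1 he).2
      have hle : hLe (hmk I [e]) (u * z) := by rw [← hz]; exact mem_minf.1 heδ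
      rcases pc_le_mul hirr hsymm hle with h1 | ⟨hind, _⟩
      · exact absurd (mem_minf.2 h1) heγ
      · by_contra hnI
        exact hind c hnI hc
    have f3 : ∀ c ∈ hrep (ppSeq (cf I (msub I u)) k), c ∈ hrep u := by
      intro c hc
      have h4 : c ∈ hrep (msub I u) := mem_hrep_of_le hirr hsymm (pcf_le hCF _ k) hc
      have h5 : c ∈ hrep (hmk I (minf I u).toList * msub I u) :=
        (mem_hrep_mul hirr hsymm).2 (Or.inr h4)
      rwa [← msub_spec hirr hsymm u] at h5
    have f4 : hmk I (minf I v \ minf I u).toList * ppSeq (cf I (msub I u)) k =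
        ppSeq (cf I (msub I u)) k * hmk I (minf I v \ minf I u).toList :=
      hmk_comm_of_indep hirr hsymm _ (fun e he c hc =>
        f2 e (Finset.mem_toList.1 he) c (f3 c hc))
    refine ⟨hmk I (minf I v \ minf I u).toList * t, ?_⟩
    rw [pcf_succ hirr hsymm hCF v, pcf_succ hirr hsymm hCF u, f1, ht]
    simp only [mul_assoc]
    rw [← mul_assoc (hmk I (minf I v \ minf I u).toList), f4, mul_assoc]

end FinAux6

section FinAux7

set_option linter.unusedSectionVars false

lemma nat_seq_stab (g : ℕ → ℕ) (hmono : ∀ n m : ℕ, n ≤ m → g n ≤ g m) (B : ℕ)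
    (hbd : ∀ n, g n ≤ B) : ∃ N, ∀ n, N ≤ n → g n = g N := by
  have hne : (Set.range g).Nonempty := ⟨g 0, 0, rfl⟩
  have hbdd : BddAbove (Set.range g) := ⟨B, by rintro _ ⟨n, rfl⟩; exact hbd n⟩
  obtain ⟨N, hN⟩ := Nat.sSup_mem hne hbdd
  refine ⟨N, fun n hn => le_antisymm ?_ (hmono N n hn)⟩
  rw [hN]
  exact le_csSup hbdd ⟨n, rfl⟩

lemma finset_seq_stab [Fintype S] [DecidableEq S] (f : ℕ → Finset S)
    (hmono : ∀ n, f n ⊆ f (n + 1)) : ∃ N, ∀ n, N ≤ n → f n = f N := by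
  have hmono' : ∀ n m : ℕ, n ≤ m → f n ⊆ f m := by
    intro n m h
    induction h with
    | refl => exact fun _ h => h
    | @step m' h ih => exact ih.trans (hmono m')
  obtain ⟨N, hN⟩ := nat_seq_stab (fun n => (f n).card)
    (fun n m h => Finset.card_le_card (hmono' n m h)) (Fintype.card S)
    (fun n => Finset.card_le_univ _)
  refine ⟨N, fun n hn => ?_⟩
  exact (Finset.eq_of_subset_of_card_le (hmono' N n hn) (le_of_eq (hN n hn))).symm

variable {I : S → S → Prop} [DecidableEq S] [Fintype S]
variable (hirr : ∀ a : S, ¬ I a a) (hsymm : ∀ a b : S, I a b → I b a)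
variable (hCF : ∀ x : Heap I, ∃! c : ℕ → Cl I, CFprop I c x)

include hirr hsymm in
lemma len_ppSeq_le (d : ℕ → Cl I) : ∀ m : ℕ, len (ppSeq d m) ≤ m * Fintype.card S := by
  intro m
  induction m with
  | zero =>
    have h0 : len (ppSeq d 0) = 0 := by
      rw [ppSeq_zero, ← hmk_nil (I := I), len_hmk]
      rfl
    omega
  | succ m ih =>
    rw [ppSeq_succ, len_mul, len_clique hsymm]
    have hcard : (d m).1.card ≤ Fintype.card S := Finset.card_le_univ _
    have : (m + 1) * Fintype.card S = m * Fintype.card S + Fintype.card S := by ring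
    omega

include hirr hsymm hCF in
lemma iterate_msub_mono (k : ℕ) {u v : Heap I} (h : hLe u v) :
    hLe ((msub I)^[k] u) ((msub I)^[k] v) := by
  induction k generalizing u v with
  | zero => exact h
  | succ k ih =>
    rw [Function.iterate_succ_apply, Function.iterate_succ_apply]
    exact ih (msub_mono hirr hsymm h)

include hirr hsymm hCF in
lemma cf_iterate (k : ℕ) (x : Heap I) : (cf I x k).1 = minf I ((msub I)^[k] x) := by
  induction k generalizing x with
  | zero => exact cf_zero hirr hsymm hCF x
  | succ k ih =>
    have h1 : cf I x (k + 1) = cf I (msub I x) k := by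
      rw [msub_cf hirr hsymm hCF]
    rw [h1, ih (msub I x), Function.iterate_succ_apply]

end FinAux7

theorem finiteness_property_of_heaps
    {S : Type} [Fintype S] [DecidableEq S] (I : S → S → Prop)
    (hsymm : ∀ a b : S, I a b → I b a)
    (hirr : ∀ a : S, ¬ I a a)
    (hconn : ∀ a b : S, Relation.ReflTransGen (fun x y : S => x ≠ y ∧ ¬ I x y) a b)
    (hcard : 1 < Fintype.card S)
    (hCF : ∀ x : Heap I, ∃! c : ℕ → Cl I, CFprop I c x)
    (x : Heap I) (u : ℕ → Heap I) (hu : ∀ n : ℕ, hLe (u n) (u (n + 1)))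
    (s : MB I)
    (hub : ∀ n : ℕ, mLe (Sum.inl (u n)) s)
    (hleast : ∀ b : MB I, (∀ n : ℕ, mLe (Sum.inl (u n)) b) → mLe s b)
    (hxs : mLe (Sum.inl x) s) :
    ∃ n : ℕ, hLe x (u n) := by
  classical
  have hmono : ∀ {n m : ℕ}, n ≤ m → hLe (u n) (u m) := by
    intro n m h
    induction h with
    | refl => exact hLe_refl _
    | @step m' h ih => exact hLe_trans ih (hu m')
  by_cases hbound : ∃ B, ∀ n, len (u n) ≤ B
  · obtain ⟨B, hB⟩ := hbound
    obtain ⟨n₀, hn₀⟩ := nat_seq_stab (fun n => len (u n))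
      (fun n m h => hLe_len (hmono h)) B hB
    have hconst : ∀ n, n₀ ≤ n → u n₀ = u n := fun n hn =>
      hLe_eq_of_len (hmono hn) (le_of_eq (hn₀ n hn))
    have hb : ∀ n : ℕ, mLe (Sum.inl (u n)) (Sum.inl (u n₀)) := by
      intro n k
      show hLe (ppSeq (cf I (u n)) k) (ppSeq (cf I (u n₀)) k)
      by_cases hn : n ≤ n₀
      · exact pcf_mono hirr hsymm hCF k (hmono hn)
      · rw [← hconst n (le_of_not_ge hn)]
        exact hLe_refl _
    have hsb := hleast _ hb
    have hxb : ∀ k, hLe (pp (Sum.inl x) k) (pp (Sum.inl (u n₀)) k) :=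
      fun k => hLe_trans (hxs k) (hsb k)
    obtain ⟨_, Nx, hNx⟩ := cf_spec hCF x
    obtain ⟨_, Nu, hNu⟩ := cf_spec hCF (u n₀)
    have h1 : hLe (ppSeq (cf I x) (max Nx Nu)) (ppSeq (cf I (u n₀)) (max Nx Nu)) :=
      hxb (max Nx Nu)
    rw [(hNx _ (le_max_left _ _)).1, (hNu _ (le_max_right _ _)).1] at h1
    exact ⟨n₀, h1⟩
  · push_neg at hbound
    have hstab : ∀ k : ℕ, ∃ N, ∀ n, N ≤ n → cf I (u n) k = cf I (u N) k := by
      intro k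
      obtain ⟨N, hN⟩ := finset_seq_stab (fun n => (cf I (u n) k).1) (fun n => by
        show (cf I (u n) k).1 ⊆ (cf I (u (n + 1)) k).1
        rw [cf_iterate hirr hsymm hCF, cf_iterate hirr hsymm hCF]
        exact minf_mono (iterate_msub_mono hirr hsymm hCF k (hu n)))
      exact ⟨N, fun n hn => Subtype.ext (hN n hn)⟩
    choose Nf hNf using hstab
    set M : ℕ → ℕ := fun k => (Finset.range (k + 1)).sup Nf with hMdef
    have hM : ∀ k j, j ≤ k → Nf j ≤ M k := fun k j hj =>
      Finset.le_sup (Finset.mem_range.2 (by omega))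
    set c : ℕ → Cl I := fun k => cf I (u (Nf k)) k with hcdef
    have hceq : ∀ k n, Nf k ≤ n → cf I (u n) k = c k := fun k n hn => hNf k n hn
    have hpp : ∀ k n, M k ≤ n → ppSeq (cf I (u n)) k = ppSeq c k := by
      intro k n hn
      apply ppSeq_congr
      intro i hi
      exact hceq i n (le_trans (hM k i (by omega)) hn)
    have hne : ∀ k, (c k).1.Nonempty := by
      intro k
      by_contra hemp
      rw [Finset.not_nonempty_iff_eq_empty] at hemp
      have hbd : ∀ n, M k ≤ n → len (u n) ≤ k * Fintype.card S := by
        intro n hn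
        have hk : cf I (u n) k = emptyCl I := by
          rw [hceq k n (le_trans (hM k k le_rfl) hn)]
          exact Subtype.ext hemp
        have hprop : ∀ j, k ≤ j → cf I (u n) j = emptyCl I := by
          intro j hj
          induction hj with
          | refl => exact hk
          | @step m hm ihm =>
            obtain ⟨hmove, _, _⟩ := cf_spec hCF (u n)
            have hmv := hmove m
            rw [ihm] at hmv
            apply Subtype.ext
            show (cf I (u n) (m + 1)).1 = (∅ : Finset S)
            rw [Finset.eq_empty_iff_forall_notMem]
            intro b hb
            obtain ⟨a, ha, _⟩ := hmv b hb
            exact absurd ha (Finset.notMem_empty a)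
        obtain ⟨_, N2, hN2⟩ := cf_spec hCF (u n)
        have hun : ppSeq (cf I (u n)) (max k N2) = u n := (hN2 _ (le_max_right _ _)).1
        have hstab2 : ppSeq (cf I (u n)) (max k N2) = ppSeq (cf I (u n)) k :=
          ppSeq_stab (fun i hi => hprop i hi) _ (le_max_left _ _)
        calc len (u n) = len (ppSeq (cf I (u n)) k) := by
              conv_lhs => rw [← hun, hstab2]
        _ ≤ k * Fintype.card S := len_ppSeq_le hirr hsymm _ k
      obtain ⟨n, hn⟩ := hbound (k * Fintype.card S)
      have hle := hLe_len (hmono (le_max_left n (M k)))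
      have hcontr := hbd (max n (M k)) (le_max_right _ _)
      omega
    have hmv : ∀ k, Move (c k) (c (k + 1)) := by
      intro k
      have h1 := hceq k (max (Nf k) (Nf (k + 1))) (le_max_left _ _)
      have h2 := hceq (k + 1) (max (Nf k) (Nf (k + 1))) (le_max_right _ _)
      obtain ⟨hmove, _, _⟩ := cf_spec hCF (u (max (Nf k) (Nf (k + 1))))
      rw [← h1, ← h2]
      exact hmove k
    have hubb : ∀ n : ℕ, mLe (Sum.inl (u n)) (Sum.inr (⟨c, hne, hmv⟩ : Bnd I)) := by
      intro n k
      show hLe (ppSeq (cf I (u n)) k) (ppSeq c k)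
      rw [← hpp k (max n (M k)) (le_max_right _ _)]
      exact pcf_mono hirr hsymm hCF k (hmono (le_max_left n (M k)))
    have hsb := hleast _ hubb
    obtain ⟨_, Nx, hNx⟩ := cf_spec hCF x
    have h1 : hLe (ppSeq (cf I x) Nx) (ppSeq c Nx) :=
      hLe_trans (hxs Nx) (hsb Nx)
    rw [(hNx Nx le_rfl).1, ← hpp Nx (M Nx) le_rfl] at h1
    exact ⟨M Nx, hLe_trans h1 (pcf_le hCF (u (M Nx)) Nx)⟩


end HeapPaper
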